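/- Suppose for each coordinate the sign error event has probability Pᵢᵉʳʳ and the update is w^(n+1) = w^(n) − η·v^(n) with v^(n) ∈ {−1,+1}^q. Then the conditional expected improvement satisfies E[F(w^(n+1)) − F(w^(n)) | w^(n)] ≤ −η‖g^(n)‖₁ + (η²/2)‖L‖₁ + 2η·Σᵢ |gᵢ^(n)|·Pᵢᵉʳʳ. -/

import Mathlib

open Finset MeasureTheory

/-- Sign with the convention `sign x = +1` for `x > 0` and `−1` for `x ≤ 0`. -/
noncomputable def mySign (x : ℝ) : ℝ := if 0 < x then 1 else -1

/-- With the update `w^(n+1) = w^(n) − η·v^(n)` where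
`v^(n) ∈ {−1,+1}^q` is random with per-coordinate sign-error probability
`Pᵢᵉʳʳ = P[vᵢ ≠ sign(gᵢ)]`, coordinate-wise smoothness gives
`E[F(w^(n+1)) − F(w^(n)) | w^(n)] ≤ −η‖g‖₁ + (η²/2)‖L‖₁ + 2η·Σᵢ|gᵢ|·Pᵢᵉʳʳ`. -/
theorem stmt_16 {Ω : Type*} [MeasurableSpace Ω] (ℙ : Measure Ω)
    [IsProbabilityMeasure ℙ]
    (q : ℕ) (F : (Fin q → ℝ) → ℝ) (L g w : Fin q → ℝ) (η : ℝ) (hη : 0 < η)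
    (v : Fin q → Ω → ℝ) (hvm : ∀ i, Measurable (v i))
    (hv : ∀ i ω, v i ω = 1 ∨ v i ω = -1)
    (hsmooth : ∀ w' : Fin q → ℝ,
      |F w' - F w - ∑ i, g i * (w' i - w i)|
        ≤ (1 / 2) * ∑ i, L i * (w' i - w i) ^ 2)
    (hint : Integrable (fun ω => F (w - η • fun i => v i ω)) ℙ) :
    ∫ ω, (F (w - η • fun i => v i ω) - F w) ∂ℙ
      ≤ -η * (∑ i, |g i|) + η ^ 2 / 2 * (∑ i, L i)
        + 2 * η * ∑ i, |g i| * (ℙ {ω | v i ω ≠ mySign (g i)}).toReal := by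
  set S : Fin q → Set Ω := fun i => {ω | v i ω ≠ mySign (g i)} with hS
  have hSm : ∀ i, MeasurableSet (S i) := by
    intro i
    have : S i = (v i) ⁻¹' ({mySign (g i)}ᶜ) := rfl
    rw [this]
    exact (hvm i) (measurableSet_singleton _).compl
  set h : Ω → ℝ := fun ω =>
    (-η * (∑ i, |g i|) + η ^ 2 / 2 * (∑ i, L i)) +
      ∑ i, (S i).indicator (fun _ => 2 * η * |g i|) ω with hh
  have hsign : ∀ x : ℝ, x * mySign x = |x| := by
    intro x
    unfold mySign
    rcases lt_trichotomy 0 x with h1 | h1 | h1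
    · rw [if_pos h1, abs_of_pos h1]; ring
    · simp [← h1]
    · rw [if_neg (by linarith), abs_of_neg h1]; ring
  have hpath : ∀ ω, F (w - η • fun i => v i ω) - F w ≤ h ω := by
    intro ω
    set w' : Fin q → ℝ := w - η • fun i => v i ω with hw'
    have hdiff : ∀ i, w' i - w i = -η * v i ω := by
      intro i; simp [hw']
    have h1 := (abs_le.mp (hsmooth w')).2
    have h2 : F w' - F w ≤ ∑ i, g i * (-η * v i ω) + (1/2) * ∑ i, L i * η ^ 2 := by
      have e1 : ∑ i, g i * (w' i - w i) = ∑ i, g i * (-η * v i ω) := by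
        refine Finset.sum_congr rfl fun i _ => by rw [hdiff]
      have e2 : ∑ i, L i * (w' i - w i) ^ 2 = ∑ i, L i * η ^ 2 := by
        refine Finset.sum_congr rfl fun i _ => by
          rw [hdiff]
          rcases hv i ω with h' | h' <;> rw [h'] <;> ring
      rw [e1, e2] at h1; linarith
    have h3 : ∀ i, g i * (-η * v i ω)
        ≤ -η * |g i| + (S i).indicator (fun _ => 2 * η * |g i|) ω := by
      intro i
      by_cases hc : v i ω = mySign (g i)
      · have : ω ∉ S i := by simp [hS, hc]
        rw [Set.indicator_of_notMem this, hc]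
        have := hsign (g i)
        nlinarith [this]
      · have hmem : ω ∈ S i := hc
        rw [Set.indicator_of_mem hmem]
        have hvv : v i ω = -mySign (g i) := by
          unfold mySign at hc ⊢
          rcases hv i ω with h' | h' <;> split_ifs at hc ⊢ with hgi <;>
            simp_all
        rw [hvv]
        have := hsign (g i)
        nlinarith [this]
    have h4 : ∑ i, g i * (-η * v i ω)
        ≤ ∑ i, (-η * |g i| + (S i).indicator (fun _ => 2 * η * |g i|) ω) :=
      Finset.sum_le_sum fun i _ => h3 i
    rw [Finset.sum_add_distrib] at h4
    simp only [hh]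
    have : ∑ i, -η * |g i| = -η * ∑ i, |g i| := by rw [← Finset.mul_sum]
    rw [this] at h4
    have : (1:ℝ)/2 * ∑ i, L i * η ^ 2 = η ^ 2 / 2 * ∑ i, L i := by
      rw [← Finset.sum_mul]; ring_nf
    linarith [h2, h4]
  have hind_int : ∀ i, Integrable ((S i).indicator (fun _ => 2 * η * |g i|)) ℙ :=
    fun i => (integrable_const _).indicator (hSm i)
  have hhint : Integrable h ℙ := by
    exact (integrable_const _).add (integrable_finset_sum _ fun i _ => hind_int i)
  have hlhs : Integrable (fun ω => F (w - η • fun i => v i ω) - F w) ℙ :=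
    hint.sub (integrable_const _)
  have hmono := integral_mono hlhs hhint hpath
  refine hmono.trans_eq ?_
  rw [hh, integral_add (integrable_const _)
    (integrable_finset_sum _ fun i _ => hind_int i),
    integral_const, integral_finset_sum _ fun i _ => hind_int i]
  simp only [measure_univ, probReal_univ, ENNReal.toReal_one, one_smul, smul_eq_mul, one_mul]
  have hi : ∀ i, ∫ ω, (S i).indicator (fun _ => 2 * η * |g i|) ω ∂ℙ
      = (ℙ (S i)).toReal * (2 * η * |g i|) := by
    intro i
    rw [integral_indicator_const _ (hSm i)]
    simp [smul_eq_mul, Measure.real]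
  simp only [hi]
  congr 1
  rw [Finset.mul_sum]
  refine Finset.sum_congr rfl fun i _ => ?_
  ring
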